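/- In A(T), for any single element a ∈ G_n and any b ∈ G_m with m ≤ n, the element b is definable from a by an atomic term: b = f_b(f_a(a)); consequently, for a, a* ∈ G_n, the map sending a to a* extends in a unique way to an automorphism of the substructure ⋃_{m≤n} G_m. -/

import Mathlib

open scoped symmDiff

/-- `RankGE succ o x` means the tree rank of `x` (w.r.t. successor relation `succ`)
is at least `o`; unranked nodes (`rk = ∞`) satisfy this for every ordinal. -/
def RankGE {α : Type*} (succ : α → α → Prop) (o : Ordinal) (x : α) : Prop :=
  ∀ β < o, ∃ y, succ x y ∧ RankGE succ β y
termination_by o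

/-- `T` is a subtree of `ω^{<ω}`: closed under initial segments. -/
def IsTree (T : Set (List ℕ)) : Prop := ∀ s t : List ℕ, s <+: t → t ∈ T → s ∈ T

/-- `τ` is an immediate successor of `σ` in `T`. -/
def TSucc (T : Set (List ℕ)) (σ τ : List ℕ) : Prop := τ ∈ T ∧ ∃ k : ℕ, τ = σ ++ [k]

instance : Std.Commutative (α := Finset (List ℕ)) (· ∆ ·) := ⟨fun a b => symmDiff_comm a b⟩
instance : Std.Associative (α := Finset (List ℕ)) (· ∆ ·) := ⟨fun a b c => symmDiff_assoc a b c⟩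

/-- The predecessor map: the symmetric-difference sum of the singletons of the
`T`-predecessors of the members of `a`. -/
def pmap (a : Finset (List ℕ)) : Finset (List ℕ) :=
  Finset.fold (· ∆ ·) ∅ (fun t => {t.dropLast}) a

/-- The carrier `G = ⋃ₙ Gₙ`: an element of `Gₙ` is a pair `(n, a)` with `a` a finite
subset of the level-`n` nodes of `T`; `(n, ∅)` is the identity `idₙ` of `Gₙ`. -/
def Gset (T : Set (List ℕ)) : Set (ℕ × Finset (List ℕ)) :=
  {x | ∀ t ∈ x.2, t ∈ T ∧ t.length = x.1}

/-- The operations `f_a`: `fA a b = a* ∆ b*` where `a*`, `b*` are the iterated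
predecessors of `a`, `b` down to the minimum of their levels. -/
def fA (x y : ℕ × Finset (List ℕ)) : ℕ × Finset (List ℕ) :=
  (min x.1 y.1, (pmap^[x.1 - min x.1 y.1] x.2) ∆ (pmap^[y.1 - min x.1 y.1] y.2))

/-- An automorphism of the structure `A(T) = (G, (f_a)_{a ∈ G})`: a bijection of `G`
commuting with each of the named unary operations `f_a`. -/
def IsAuto (T : Set (List ℕ)) (g : ℕ × Finset (List ℕ) → ℕ × Finset (List ℕ)) : Prop :=
  Set.BijOn g (Gset T) (Gset T) ∧ ∀ a ∈ Gset T, ∀ b ∈ Gset T, g (fA a b) = fA a (g b)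

/-- The substructure `⋃_{m ≤ n} Gₘ`. -/
def GsetLe (T : Set (List ℕ)) (n : ℕ) : Set (ℕ × Finset (List ℕ)) :=
  {x | x ∈ Gset T ∧ x.1 ≤ n}

lemma pmap_empty : pmap ∅ = ∅ := rfl

lemma pmap_insert (t : List ℕ) (s : Finset (List ℕ)) (h : t ∉ s) :
    pmap (insert t s) = {t.dropLast} ∆ pmap s := Finset.fold_insert h

lemma pmap_singleton_symmDiff (t : List ℕ) (s : Finset (List ℕ)) :
    pmap ({t} ∆ s) = {t.dropLast} ∆ pmap s := by
  by_cases h : t ∈ s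
  · have h1 : {t} ∆ s = s.erase t := by
      ext u
      simp only [symmDiff, Finset.mem_sup, Finset.sup_eq_union, Finset.mem_union,
        Finset.mem_sdiff, Finset.mem_singleton, Finset.mem_erase]
      constructor
      · rintro (⟨rfl, hu⟩ | ⟨hu, hn⟩)
        · exact absurd h hu
        · exact ⟨hn, hu⟩
      · rintro ⟨hn, hu⟩; exact Or.inr ⟨hu, hn⟩
    have h2 := pmap_insert t (s.erase t) (Finset.notMem_erase t s)
    rw [Finset.insert_erase h] at h2
    rw [h1, h2, symmDiff_symmDiff_cancel_left]
  · have h1 : {t} ∆ s = insert t s := by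
      ext u
      simp only [symmDiff, Finset.sup_eq_union, Finset.mem_union, Finset.mem_sdiff,
        Finset.mem_singleton, Finset.mem_insert]
      constructor
      · rintro (⟨rfl, _⟩ | ⟨hu, _⟩)
        · exact Or.inl rfl
        · exact Or.inr hu
      · rintro (rfl | hu)
        · exact Or.inl ⟨rfl, h⟩
        · exact Or.inr ⟨hu, fun he => h (he ▸ hu)⟩
    rw [h1, pmap_insert t s h]

lemma pmap_symmDiff (a b : Finset (List ℕ)) : pmap (a ∆ b) = pmap a ∆ pmap b := by
  induction a using Finset.induction_on with
  | empty =>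
    rw [show (∅ : Finset (List ℕ)) ∆ b = b from Finset.bot_eq_empty ▸ bot_symmDiff b,
      pmap_empty, show (∅ : Finset (List ℕ)) ∆ pmap b = pmap b from
        Finset.bot_eq_empty ▸ bot_symmDiff _]
  | insert t s h ih =>
    have h1 : insert t s = {t} ∆ s := by
      ext u
      simp only [symmDiff, Finset.sup_eq_union, Finset.mem_union, Finset.mem_sdiff,
        Finset.mem_singleton, Finset.mem_insert]
      constructor
      · rintro (rfl | hu)
        · exact Or.inl ⟨rfl, h⟩
        · exact Or.inr ⟨hu, fun he => h (he ▸ hu)⟩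
      · rintro (⟨rfl, _⟩ | ⟨hu, _⟩)
        · exact Or.inl rfl
        · exact Or.inr hu
    rw [h1, symmDiff_assoc, pmap_singleton_symmDiff, pmap_singleton_symmDiff, ih,
      symmDiff_assoc]

lemma pmap_iter_symmDiff (k : ℕ) (a b : Finset (List ℕ)) :
    pmap^[k] (a ∆ b) = pmap^[k] a ∆ pmap^[k] b := by
  induction k generalizing a b with
  | zero => rfl
  | succ k ih => simp only [Function.iterate_succ_apply, pmap_symmDiff, ih]

lemma pmap_iter_empty (k : ℕ) : pmap^[k] (∅ : Finset (List ℕ)) = ∅ := by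
  induction k with
  | zero => rfl
  | succ k ih => simp only [Function.iterate_succ_apply, pmap_empty, ih]

lemma mem_pmap {a : Finset (List ℕ)} :
    ∀ t ∈ pmap a, ∃ s ∈ a, t = s.dropLast := by
  induction a using Finset.induction_on with
  | empty => intro t ht; simp [pmap_empty] at ht
  | insert u s hn ih =>
    intro t ht
    rw [pmap_insert u s hn, Finset.mem_symmDiff] at ht
    rcases ht with ⟨h1, _⟩ | ⟨h1, _⟩
    · exact ⟨u, Finset.mem_insert_self u s, Finset.mem_singleton.1 h1⟩
    · obtain ⟨v, hv, rfl⟩ := ih t h1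
      exact ⟨v, Finset.mem_insert_of_mem hv, rfl⟩

lemma pmap_level {T : Set (List ℕ)} (hT : IsTree T) {k : ℕ} {a : Finset (List ℕ)}
    (h : ∀ t ∈ a, t ∈ T ∧ t.length = k + 1) :
    ∀ t ∈ pmap a, t ∈ T ∧ t.length = k := by
  intro t ht
  obtain ⟨s, hs, rfl⟩ := mem_pmap t ht
  obtain ⟨hsT, hsl⟩ := h s hs
  refine ⟨hT _ _ (List.dropLast_prefix s) hsT, ?_⟩
  rw [List.length_dropLast, hsl]; rfl

lemma pmap_iter_level {T : Set (List ℕ)} (hT : IsTree T) (i : ℕ) {k : ℕ}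
    {a : Finset (List ℕ)} (h : ∀ t ∈ a, t ∈ T ∧ t.length = k + i) :
    ∀ t ∈ pmap^[i] a, t ∈ T ∧ t.length = k := by
  induction i generalizing a with
  | zero => simpa using h
  | succ i ih =>
    rw [Function.iterate_succ_apply]
    exact ih (pmap_level hT (by rw [Nat.add_succ] at h; exact h))

theorem stmt_10 (T : Set (List ℕ)) (hT : IsTree T) (n m : ℕ) (hmn : m ≤ n)
    (x y : ℕ × Finset (List ℕ)) (hx : x ∈ Gset T) (hxn : x.1 = n)
    (hy : y ∈ Gset T) (hym : y.1 = m) :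
    y = fA y (fA x x) ∧
      ∀ x' : ℕ × Finset (List ℕ), x' ∈ Gset T → x'.1 = n →
        ∃ h : ℕ × Finset (List ℕ) → ℕ × Finset (List ℕ),
          (Set.BijOn h (GsetLe T n) (GsetLe T n) ∧
            (∀ u ∈ GsetLe T n, ∀ v ∈ GsetLe T n, h (fA u v) = fA u (h v)) ∧ h x = x') ∧
          ∀ h' : ℕ × Finset (List ℕ) → ℕ × Finset (List ℕ),
            (Set.BijOn h' (GsetLe T n) (GsetLe T n) ∧
              (∀ u ∈ GsetLe T n, ∀ v ∈ GsetLe T n, h' (fA u v) = fA u (h' v)) ∧ h' x = x') →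
            Set.EqOn h' h (GsetLe T n) := by
  have hempty : ∀ v : ℕ × Finset (List ℕ), v.1 ≤ n → fA v (n, ∅) = v := by
    intro v hv
    have hmin : min v.1 n = v.1 := min_eq_left hv
    simp only [fA, hmin, Nat.sub_self, Function.iterate_zero, id, pmap_iter_empty]
    rw [show v.2 ∆ ∅ = v.2 from Finset.bot_eq_empty ▸ symmDiff_bot v.2]
  have hfxx : fA x x = (n, ∅) := by
    simp [fA, hxn, symmDiff_self, Finset.bot_eq_empty]
  constructor
  · rw [hfxx, hempty y (by omega)]
  intro x' hx' hx'n
  set c : Finset (List ℕ) := x.2 ∆ x'.2 with hc_def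
  have hc : ∀ t ∈ c, t ∈ T ∧ t.length = n := by
    intro t ht
    rw [hc_def, Finset.mem_symmDiff] at ht
    rcases ht with ⟨h1, _⟩ | ⟨h1, _⟩
    · exact hxn ▸ hx t h1
    · exact hx'n ▸ hx' t h1
  have hlevel : ∀ q ≤ n, ∀ t ∈ pmap^[n - q] c, t ∈ T ∧ t.length = q := by
    intro q hq
    exact pmap_iter_level hT (n - q) (by rw [Nat.add_sub_cancel' hq]; exact hc)
  set h : ℕ × Finset (List ℕ) → ℕ × Finset (List ℕ) :=
    fun u => (u.1, u.2 ∆ pmap^[n - u.1] c) with h_def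
  have hinv : ∀ u, h (h u) = u := by
    intro u
    simp only [h_def]
    rw [symmDiff_assoc, symmDiff_self, show (⊥ : Finset (List ℕ)) = ∅ from Finset.bot_eq_empty,
      show u.2 ∆ ∅ = u.2 from Finset.bot_eq_empty ▸ symmDiff_bot u.2]
  have hfC : ∀ v : ℕ × Finset (List ℕ), v.1 ≤ n → fA v (n, c) = h v := by
    intro v hv
    have hmin : min v.1 n = v.1 := min_eq_left hv
    simp only [fA, h_def, hmin, Nat.sub_self, Function.iterate_zero, id]
  have hmem : ∀ u ∈ GsetLe T n, h u ∈ GsetLe T n := by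
    rintro u ⟨hu, hun⟩
    refine ⟨?_, hun⟩
    intro t ht
    simp only [h_def] at ht ⊢
    rw [Finset.mem_symmDiff] at ht
    rcases ht with ⟨h1, _⟩ | ⟨h1, _⟩
    · exact hu t h1
    · exact hlevel u.1 hun t h1
  have hcomm : ∀ u : ℕ × Finset (List ℕ), ∀ v : ℕ × Finset (List ℕ), v.1 ≤ n →
      h (fA u v) = fA u (h v) := by
    intro u v hv
    have hr : min u.1 v.1 ≤ v.1 := min_le_right _ _
    simp only [h_def, fA, pmap_iter_symmDiff]
    rw [← Function.iterate_add_apply pmap (v.1 - min u.1 v.1) (n - v.1) c,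
      show v.1 - min u.1 v.1 + (n - v.1) = n - min u.1 v.1 by omega, symmDiff_assoc]
  have hxmem : x ∈ GsetLe T n := ⟨hx, le_of_eq hxn⟩
  have hidmem : (n, (∅ : Finset (List ℕ))) ∈ GsetLe T n := by
    refine ⟨?_, le_refl n⟩
    intro t ht
    simp at ht
  have hhx : h x = x' := by
    simp only [h_def, hxn, Nat.sub_self, Function.iterate_zero, id]
    rw [hc_def, symmDiff_symmDiff_cancel_left]
    exact Prod.ext (hx'n.symm) rfl
  refine ⟨h, ⟨⟨hmem, ?_, ?_⟩, fun u _ v hv => hcomm u v hv.2, hhx⟩, ?_⟩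
  · intro a _ b _ hab
    have := congrArg h hab
    rwa [hinv, hinv] at this
  · intro v hv
    exact ⟨h v, hmem v hv, hinv v⟩
  · rintro h' ⟨hb', hc', hhx'⟩ v hv
    have hid' : h' (n, ∅) = (n, c) := by
      have := hc' x hxmem x hxmem
      rw [hfxx, hhx'] at this
      rw [this]
      simp [fA, hxn, hx'n, hc_def]
    have := hc' v hv (n, ∅) hidmem
    rw [hempty v hv.2, hid'] at this
    rw [this, hfC v hv.2]
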